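/- Let f : ℂ → ℂ be continuously differentiable over ℝ (ContDiff ℝ 1 f) with compact support, and let x ∈ ℂ. Then ∫ w, (∂̄f)(w) / (w - x) ∂volume = -π * f x, where ∂̄f(w) := (fderiv ℝ f w 1 + Complex.I * fderiv ℝ f w Complex.I) / 2. -/

import Mathlib

open MeasureTheory

/-- The Wirtinger antiholomorphic derivative `∂̄f` of `f : ℂ → ℂ` viewed as ℝ-differentiable. -/
noncomputable def dbar (f : ℂ → ℂ) (w : ℂ) : ℂ :=
  (fderiv ℝ f w 1 + Complex.I * fderiv ℝ f w Complex.I) / 2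

open Set Filter Topology

lemma pompeiu_key_id (u v : ℂ) (r a b : ℝ) (hr : (r:ℂ) ≠ 0) (hab : (a:ℂ)^2 + (b:ℂ)^2 = 1)
    (he : ((a:ℂ) + (b:ℂ) * Complex.I) ≠ 0) :
    r • (((u + Complex.I * v) / 2) / ((r:ℂ) * ((a:ℂ) + (b:ℂ) * Complex.I))) =
      (a • u + b • v) / 2 + Complex.I * ((-b) • u + a • v) / 2 := by
  simp only [Complex.real_smul, Complex.ofReal_neg]
  have hinv : ((a:ℂ) + (b:ℂ) * Complex.I)⁻¹ = (a:ℂ) - (b:ℂ) * Complex.I :=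
    inv_eq_of_mul_eq_one_right (by linear_combination hab - (b:ℂ)^2 * Complex.I_sq)
  rw [div_eq_mul_inv ((u + Complex.I * v) / 2), mul_inv, hinv]
  calc _ = ((r:ℂ) * (r:ℂ)⁻¹) * ((u + Complex.I * v) / 2 * ((a:ℂ) - (b:ℂ) * Complex.I)) := by ring
    _ = _ := by
      rw [mul_inv_cancel₀ hr, one_mul]
      linear_combination (-(v * (b:ℂ)) / 2) * Complex.I_sq

theorem pompeiu_zero (g : ℂ → ℂ) (hg : ContDiff ℝ 1 g) (hgsupp : HasCompactSupport g) :
    ∫ w : ℂ, dbar g w / w ∂volume = -(Real.pi : ℂ) * g 0 := by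
  obtain ⟨R, hRsub⟩ := hgsupp.isCompact.isBounded.subset_closedBall (0 : ℂ)
  set D : ℂ → (ℂ →L[ℝ] ℂ) := fderiv ℝ g with hD_def
  have hDcont : Continuous D := hg.continuous_fderiv one_ne_zero
  have hDzero : ∀ w : ℂ, R < ‖w‖ → D w = 0 := by
    intro w hw
    apply Function.notMem_support.mp
    intro hmem
    have : w ∈ Metric.closedBall (0:ℂ) R := hRsub (support_fderiv_subset (𝕜 := ℝ) hmem)
    rw [Metric.mem_closedBall, Complex.dist_eq, sub_zero] at this
    exact absurd this (not_le.mpr hw)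
  have hgzero : ∀ w : ℂ, R < ‖w‖ → g w = 0 := by
    intro w hw
    apply image_eq_zero_of_notMem_tsupport
    intro hmem
    have : w ∈ Metric.closedBall (0:ℂ) R := hRsub hmem
    rw [Metric.mem_closedBall, Complex.dist_eq, sub_zero] at this
    exact absurd this (not_le.mpr hw)
  set e : ℝ → ℂ := fun θ => (Real.cos θ : ℂ) + (Real.sin θ : ℂ) * Complex.I with he_def
  set c : ℝ × ℝ → ℂ := fun p => (p.1 : ℂ) * e p.2 with hc_def
  have habse : ∀ θ, ‖e θ‖ = 1 := by
    intro θ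
    rw [he_def]
    simp only []
    rw [Complex.ofReal_cos, Complex.ofReal_sin, ← Complex.exp_mul_I,
      Complex.norm_exp_ofReal_mul_I]
  have he_ne : ∀ θ, e θ ≠ 0 := fun θ => by
    intro h; have := habse θ; rw [h] at this; simp at this
  have habsc : ∀ p : ℝ × ℝ, ‖c p‖ = |p.1| := by
    intro p; rw [hc_def]; simp [norm_mul, habse]
  have hccont : Continuous c := by fun_prop
  set A : ℝ × ℝ → ℂ := fun p => (D (c p)) (e p.2) / 2 with hA_def
  set B : ℝ × ℝ → ℂ := fun p =>
    Complex.I * (D (c p)) (-(Real.sin p.2 : ℂ) + (Real.cos p.2 : ℂ) * Complex.I) / 2 with hB_def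
  have hAcont : Continuous A := by
    apply Continuous.div_const
    exact (hDcont.comp hccont).clm_apply (by fun_prop)
  have hBcont : Continuous B := by
    apply Continuous.div_const
    exact continuous_const.mul ((hDcont.comp hccont).clm_apply (by fun_prop))
  set S : Set (ℝ × ℝ) := polarCoord.target with hS_def
  have hS_eq : S = Ioi (0:ℝ) ×ˢ Ioo (-Real.pi) Real.pi := polarCoord_target
  have hSmeas : MeasurableSet S := polarCoord.open_target.measurableSet
  set K : Set (ℝ × ℝ) := Icc (0:ℝ) R ×ˢ Icc (-Real.pi) Real.pi with hK_def
  have hvanish : ∀ p ∈ S \ K, D (c p) = 0 := by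
    intro p hp
    obtain ⟨hpS, hpK⟩ := hp
    rw [hS_eq] at hpS
    obtain ⟨h1, h2⟩ := hpS
    have h2' : p.2 ∈ Icc (-Real.pi) Real.pi := Ioo_subset_Icc_self h2
    have h1' : p.1 ∉ Icc (0:ℝ) R := by
      intro h; exact hpK ⟨h, h2'⟩
    have hr : R < p.1 := by
      rcases not_and_or.mp h1' with h | h
      · exact absurd (le_of_lt h1) h
      · exact not_le.mp h
    apply hDzero
    rw [habsc, abs_of_pos h1]
    exact hr
  have hintOn : ∀ h : ℝ × ℝ → ℂ, Continuous h → (∀ p ∈ S \ K, h p = 0) →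
      IntegrableOn h S volume := by
    intro h hcont hzero
    have h1 : IntegrableOn h K volume :=
      hcont.continuousOn.integrableOn_compact (isCompact_Icc.prod isCompact_Icc)
    have hmeasSK : MeasurableSet (S \ K) :=
      hSmeas.diff (measurableSet_Icc.prod measurableSet_Icc)
    have h2 : IntegrableOn h (S \ K) volume := by
      rw [integrableOn_congr_fun hzero hmeasSK]
      exact integrableOn_zero
    have h3 : IntegrableOn h ((S ∩ K) ∪ (S \ K)) volume :=
      (h1.mono_set inter_subset_right).union h2
    rwa [Set.inter_union_diff] at h3
  have hAzero : ∀ p ∈ S \ K, A p = 0 := fun p hp => by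
    rw [hA_def]; simp [hvanish p hp]
  have hBzero : ∀ p ∈ S \ K, B p = 0 := fun p hp => by
    rw [hB_def]; simp [hvanish p hp]
  have hAint : IntegrableOn A S volume := hintOn A hAcont hAzero
  have hBint : IntegrableOn B S volume := hintOn B hBcont hBzero
  -- change of variables
  have step1 : ∫ w : ℂ, dbar g w / w ∂volume = ∫ p in S, (A p + B p) ∂volume := by
    rw [← Complex.integral_comp_polarCoord_symm (fun w => dbar g w / w)]
    apply setIntegral_congr_fun hSmeas
    intro p hp
    rw [hS_eq] at hp
    have hr : (0:ℝ) < p.1 := hp.1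
    simp only [Complex.polarCoord_symm_apply]
    show p.1 • (dbar g (c p) / c p) = A p + B p
    have hexpand : ∀ (a b : ℝ), (D (c p)) ((a:ℂ) + (b:ℂ) * Complex.I) =
        a • (D (c p) 1) + b • (D (c p) Complex.I) := by
      intro a b
      have h : ((a:ℂ) + (b:ℂ) * Complex.I) = a • (1:ℂ) + b • Complex.I := by
        simp [Complex.real_smul]
      rw [h, map_add, ContinuousLinearMap.map_smul, ContinuousLinearMap.map_smul]
    have hA' : A p = (Real.cos p.2 • (D (c p) 1) + Real.sin p.2 • (D (c p) Complex.I)) / 2 := by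
      rw [hA_def]
      simp only []
      rw [he_def]
      simp only []
      rw [hexpand]
    have hB' : B p = Complex.I * ((-(Real.sin p.2)) • (D (c p) 1) +
        Real.cos p.2 • (D (c p) Complex.I)) / 2 := by
      rw [hB_def]
      simp only []
      rw [show (-(Real.sin p.2 : ℂ)) = ((-Real.sin p.2 : ℝ) : ℂ) by push_cast; ring]
      rw [hexpand]
    have hdb : dbar g (c p) = (D (c p) 1 + Complex.I * D (c p) Complex.I) / 2 := rfl
    rw [hA', hB', hdb]
    have hcc : c p = (p.1 : ℂ) * ((Real.cos p.2 : ℂ) + (Real.sin p.2 : ℂ) * Complex.I) := rfl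
    rw [hcc]
    have hab : ((Real.cos p.2 : ℂ))^2 + ((Real.sin p.2 : ℂ))^2 = 1 := by
      norm_cast
      exact Real.cos_sq_add_sin_sq p.2
    exact pompeiu_key_id _ _ _ _ _ (by exact_mod_cast hr.ne') hab (he_ne p.2)
  rw [step1]
  have step2 : ∫ p in S, (A p + B p) ∂volume = (∫ p in S, A p ∂volume) + ∫ p in S, B p ∂volume :=
    integral_add hAint hBint
  have hmeasrw : volume.restrict S =
      ((volume.restrict (Ioi (0:ℝ))).prod (volume.restrict (Ioo (-Real.pi) Real.pi))) := by
    rw [Measure.prod_restrict, hS_eq, ← Measure.volume_eq_prod]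
  -- B integral is zero
  have stepB : ∫ p in S, B p ∂volume = 0 := by
    have hBint' : Integrable B
        ((volume.restrict (Ioi (0:ℝ))).prod (volume.restrict (Ioo (-Real.pi) Real.pi))) := by
      rw [← hmeasrw]; exact hBint
    rw [show (∫ p in S, B p ∂volume) = ∫ p, B p
        ∂((volume.restrict (Ioi (0:ℝ))).prod (volume.restrict (Ioo (-Real.pi) Real.pi))) by
      rw [← hmeasrw]]
    rw [integral_prod _ hBint']
    have inner : ∀ r ∈ Ioi (0:ℝ), (∫ θ in Ioo (-Real.pi) Real.pi, B (r, θ)) = 0 := by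
      intro r hr
      have hrne : (r:ℝ) ≠ 0 := (ne_of_gt hr)
      have hderiv : ∀ θ ∈ uIcc (-Real.pi) Real.pi,
          HasDerivAt (fun θ => Complex.I / (2*(r:ℂ)) * g (c (r, θ))) (B (r, θ)) θ := by
        intro θ _
        have h1 : HasDerivAt (fun θ : ℝ => e θ)
            (-(Real.sin θ : ℂ) + (Real.cos θ : ℂ) * Complex.I) θ := by
          have hc' := (Real.hasDerivAt_cos θ).ofReal_comp
          have hs' := (Real.hasDerivAt_sin θ).ofReal_comp
          have := hc'.add (hs'.mul_const Complex.I)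
          rw [he_def]
          refine this.congr_deriv ?_
          rw [Complex.ofReal_neg]
        have h2 : HasDerivAt (fun θ : ℝ => c (r, θ))
            ((r:ℂ) * (-(Real.sin θ : ℂ) + (Real.cos θ : ℂ) * Complex.I)) θ := by
          simpa [hc_def] using h1.const_mul (r:ℂ)
        have h3 : HasDerivAt (fun θ : ℝ => g (c (r, θ)))
            ((D (c (r, θ))) ((r:ℂ) * (-(Real.sin θ : ℂ) + (Real.cos θ : ℂ) * Complex.I))) θ :=
          ((hg.differentiable one_ne_zero (c (r, θ))).hasFDerivAt).comp_hasDerivAt θ h2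
        have h4 := h3.const_mul (Complex.I / (2*(r:ℂ)))
        refine h4.congr_deriv ?_
        symm
        have hsm : (D (c (r, θ))) ((r:ℂ) * (-(Real.sin θ : ℂ) + (Real.cos θ : ℂ) * Complex.I))
            = (r:ℝ) • (D (c (r, θ))) (-(Real.sin θ : ℂ) + (Real.cos θ : ℂ) * Complex.I) := by
          rw [← ContinuousLinearMap.map_smul, Complex.real_smul]
        rw [hsm, Complex.real_smul, hB_def]
        simp only []
        have : (r:ℂ) ≠ 0 := by exact_mod_cast hrne
        field_simp
      have hintbl : IntervalIntegrable (fun θ => B (r, θ)) volume (-Real.pi) Real.pi :=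
        (hBcont.comp (continuous_const.prodMk continuous_id)).intervalIntegrable _ _
      have hle : -Real.pi ≤ Real.pi := by linarith [Real.pi_pos]
      rw [← integral_Ioc_eq_integral_Ioo, ← intervalIntegral.integral_of_le hle,
        intervalIntegral.integral_eq_sub_of_hasDerivAt hderiv hintbl]
      have hcp1 : c (r, Real.pi) = c (r, -Real.pi) := by
        rw [hc_def]
        simp [he_def, Real.cos_pi, Real.sin_pi]
      rw [hcp1, sub_self]
    rw [setIntegral_congr_fun measurableSet_Ioi inner, integral_zero]
  -- A integral
  have stepA : ∫ p in S, A p ∂volume = -(Real.pi : ℂ) * g 0 := by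
    have hAint' : Integrable A
        ((volume.restrict (Ioi (0:ℝ))).prod (volume.restrict (Ioo (-Real.pi) Real.pi))) := by
      rw [← hmeasrw]; exact hAint
    rw [show (∫ p in S, A p ∂volume) = ∫ p, A p
        ∂((volume.restrict (Ioi (0:ℝ))).prod (volume.restrict (Ioo (-Real.pi) Real.pi))) by
      rw [← hmeasrw]]
    rw [integral_prod_symm _ hAint']
    have inner : ∀ θ ∈ Ioo (-Real.pi) Real.pi,
        (∫ r in Ioi (0:ℝ), A (r, θ)) = -(g 0) / 2 := by
      intro θ _
      have hderiv : ∀ r ∈ Ici (0:ℝ), HasDerivAt (fun r => g (c (r, θ)) / 2) (A (r, θ)) r := by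
        intro r _
        have h1 : HasDerivAt (fun r : ℝ => c (r, θ)) (e θ) r := by
          have := ((hasDerivAt_id r).ofReal_comp).mul_const (e θ)
          simpa [hc_def] using this
        have h2 : HasDerivAt (fun r : ℝ => g (c (r, θ))) ((D (c (r, θ))) (e θ)) r :=
          ((hg.differentiable one_ne_zero (c (r, θ))).hasFDerivAt).comp_hasDerivAt r h1
        exact h2.div_const 2
      have hint : IntegrableOn (fun r => A (r, θ)) (Ioi 0) volume := by
        have hcont : Continuous (fun r => A (r, θ)) :=
          hAcont.comp (continuous_id.prodMk continuous_const)
        have hcs : HasCompactSupport (fun r => A (r, θ)) := by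
          apply HasCompactSupport.intro (isCompact_Icc (a := -R) (b := R))
          intro r hr
          have habs : R < |r| := by
            simp only [mem_Icc, not_and_or, not_le] at hr
            rcases hr with h | h
            · calc R < -r := by linarith
                _ ≤ |r| := neg_le_abs r
            · exact lt_of_lt_of_le h (le_abs_self r)
          have hD0 : D (c (r, θ)) = 0 := by
            apply hDzero
            rw [habsc]
            exact habs
          rw [hA_def]
          simp [hD0]
        exact (hcont.integrable_of_hasCompactSupport hcs).integrableOn
      have htend : Tendsto (fun r => g (c (r, θ)) / 2) atTop (𝓝 0) := by
        apply Tendsto.congr' _ (tendsto_const_nhds (x := (0:ℂ)))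
        filter_upwards [Ioi_mem_atTop R] with r hr
        have : g (c (r, θ)) = 0 := by
          apply hgzero
          rw [habsc]
          calc R < r := hr
            _ ≤ |r| := le_abs_self r
        simp [this]
      have := integral_Ioi_of_hasDerivAt_of_tendsto' hderiv hint htend
      rw [this]
      have hc0 : c (0, θ) = 0 := by rw [hc_def]; simp
      rw [hc0]
      ring
    rw [setIntegral_congr_fun measurableSet_Ioo inner, setIntegral_const]
    rw [Measure.real, Real.volume_Ioo]
    rw [ENNReal.toReal_ofReal (by linarith [Real.pi_pos] : (0:ℝ) ≤ Real.pi - -Real.pi)]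
    rw [Complex.real_smul]
    push_cast
    ring
  rw [step2, stepA, stepB, add_zero]

/-- Cauchy–Pompeiu formula for compactly supported `C¹` functions. -/
theorem cauchy_pompeiu_compact_support (f : ℂ → ℂ) (hf : ContDiff ℝ 1 f)
    (hsupp : HasCompactSupport f) (x : ℂ) :
    ∫ w : ℂ, dbar f w / (w - x) ∂volume = -(Real.pi : ℂ) * f x := by
  set g : ℂ → ℂ := fun w => f (w + x) with hg_def
  have hg : ContDiff ℝ 1 g := hf.comp (contDiff_id.add contDiff_const)
  have hgsupp : HasCompactSupport g := by
    have := hsupp.comp_homeomorph (Homeomorph.addRight x)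
    exact this
  have hDg : ∀ w : ℂ, fderiv ℝ g w = fderiv ℝ f (w + x) := by
    intro w
    have h1 : HasFDerivAt g ((fderiv ℝ f (w + x)).comp (ContinuousLinearMap.id ℝ ℂ)) w :=
      ((hf.differentiable one_ne_zero (w + x)).hasFDerivAt).comp w ((hasFDerivAt_id w).add_const x)
    simpa using h1.fderiv
  have hdbar : ∀ w : ℂ, dbar f (w + x) = dbar g w := by
    intro w; unfold dbar; rw [hDg]
  have htrans : ∫ w : ℂ, dbar f w / (w - x) ∂volume = ∫ w : ℂ, dbar g w / w ∂volume := by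
    rw [← integral_add_right_eq_self (fun w : ℂ => dbar f w / (w - x)) x]
    congr 1
    ext w
    rw [add_sub_cancel_right, hdbar]
  rw [htrans, pompeiu_zero g hg hgsupp]
  simp [hg_def]
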